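/- GNPG upper bound with exact gradients: define θ_{t+1} := θ_t + (1/6)·g_t/‖g_t‖₂ for all t ≥ 1, where g_t := d(π_{θ_t}ᵀ r)/dθ_t (these gradients are nonzero because π_{θ_t} has full support and r is non-constant). Let c := inf_{t ≥ 1} π_{θ_t}(a*). If c > 0, then for all t ≥ 1, (π* − π_{θ_t})ᵀ r ≤ (π* − π_{θ_1})ᵀ r · exp(−c·(t − 1)/12). Moreover, if π_{θ_1}(a) = 1/K for all a, then c ≥ 1/K. -/

import Mathlib

open Finset Real Filter

/-- Softmax policy: `π_θ(a) = exp(θ(a)) / Σ_{a'} exp(θ(a'))`. -/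
noncomputable def softmax {K : ℕ} (θ : Fin K → ℝ) (a : Fin K) : ℝ :=
  Real.exp (θ a) / ∑ a', Real.exp (θ a')

/-- Expected reward `π_θᵀ r`. -/
noncomputable def expReward {K : ℕ} (r θ : Fin K → ℝ) : ℝ :=
  ∑ a, softmax θ a * r a

/-- Policy gradient component `(d π_θᵀ r / dθ)(a) = π_θ(a)·(r(a) − π_θᵀ r)`. -/
noncomputable def pgrad {K : ℕ} (r θ : Fin K → ℝ) (a : Fin K) : ℝ :=
  softmax θ a * (r a - expReward r θ)

/-- Euclidean norm of the policy gradient. -/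
noncomputable def pgradNorm {K : ℕ} (r θ : Fin K → ℝ) : ℝ :=
  Real.sqrt (∑ a, pgrad r θ a ^ 2)

section Aux

variable {K : ℕ} [Nonempty (Fin K)] (r θ : Fin K → ℝ)

lemma sumexp_pos : 0 < ∑ a', Real.exp (θ a') :=
  Finset.sum_pos (fun a _ => Real.exp_pos _) Finset.univ_nonempty

lemma softmax_pos (a : Fin K) : 0 < softmax θ a :=
  div_pos (Real.exp_pos _) (sumexp_pos θ)

lemma softmax_sum : ∑ a, softmax θ a = 1 := by
  simp only [softmax]
  rw [← Finset.sum_div, div_self (ne_of_gt (sumexp_pos θ))]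

lemma softmax_le_one (a : Fin K) : softmax θ a ≤ 1 := by
  have := Finset.single_le_sum (f := softmax θ) (fun b _ => (softmax_pos θ b).le)
    (Finset.mem_univ a)
  rwa [softmax_sum] at this

lemma exp_quad {v : ℝ} (h : |v| ≤ 1) : Real.exp v ≤ 1 + v + 3/4 * v^2 := by
  have hb := Real.exp_bound h (n := 2) (by norm_num)
  have h2 : ∑ m ∈ Finset.range 2, v ^ m / m.factorial = 1 + v := by
    simp [Finset.sum_range_succ]
  rw [h2] at hb
  have := (abs_sub_le_iff.1 hb).1
  have habs : |v| ^ 2 = v ^ 2 := sq_abs v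
  rw [habs] at this
  norm_num at this ⊢
  linarith

lemma scalar_lb {v g : ℝ} (hv : |v| ≤ 1) :
    g + v * g - 3/4 * (v^2 * |g|) ≤ Real.exp v * g := by
  rcases le_or_gt 0 g with h | h
  · rw [abs_of_nonneg h]
    have h1 : (1 + v) * g ≤ Real.exp v * g :=
      mul_le_mul_of_nonneg_right (by linarith [Real.add_one_le_exp v]) h
    nlinarith [sq_nonneg v, mul_nonneg (sq_nonneg v) h]
  · rw [abs_of_neg h]
    have h1 := exp_quad hv
    nlinarith [mul_nonneg (sub_nonneg.2 h1) (neg_nonneg.2 h.le)]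

lemma scalar_ub {v : ℝ} (hv : |v| ≤ 1/6) : Real.exp v ≤ 19/16 := by
  have h1 : |v| ≤ 1 := hv.trans (by norm_num)
  have := exp_quad h1
  have h2 : v ≤ 1/6 := (abs_le.1 hv).2
  have h3 : v^2 ≤ (1/6)^2 := by
    rw [← sq_abs]; exact pow_le_pow_left₀ (abs_nonneg v) hv 2
  nlinarith

lemma expReward_lt (hK : 2 ≤ K) (hr : ∀ a, 0 < r a ∧ r a ≤ 1)
    (astar : Fin K) (hstar : ∀ a, a ≠ astar → r a < r astar) :
    expReward r θ < r astar := by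
  obtain ⟨b, hb⟩ : ∃ b : Fin K, b ≠ astar := by
    rcases Nat.lt_or_ge (astar : ℕ) 1 with h | h
    · exact ⟨⟨1, by omega⟩, by intro he; rw [← he] at h; simp at h⟩
    · exact ⟨⟨0, by omega⟩, by intro he; rw [← he] at h; simp at h⟩
  have hlt : ∑ a, softmax θ a * r a < ∑ a, softmax θ a * r astar := by
    apply Finset.sum_lt_sum
    · intro i _
      rcases eq_or_ne i astar with rfl | hne
      · exact le_rfl
      · exact mul_le_mul_of_nonneg_left (hstar i hne).le (softmax_pos θ i).le
    · exact ⟨b, Finset.mem_univ b,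
        mul_lt_mul_of_pos_left (hstar b hb) (softmax_pos θ b)⟩
  calc expReward r θ = ∑ a, softmax θ a * r a := rfl
    _ < ∑ a, softmax θ a * r astar := hlt
    _ = r astar := by rw [← Finset.sum_mul, softmax_sum, one_mul]

end Aux

section Main
variable {K : ℕ}

lemma sum_pgrad_sq [Nonempty (Fin K)] (r θ : Fin K → ℝ) :
    ∑ a, pgrad r θ a ^ 2 = (pgradNorm r θ) ^ 2 := by
  rw [pgradNorm, Real.sq_sqrt (Finset.sum_nonneg fun a _ => sq_nonneg _)]

lemma abs_pgrad_le (r θ : Fin K → ℝ) (a : Fin K) : |pgrad r θ a| ≤ pgradNorm r θ := by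
  rw [pgradNorm, ← Real.sqrt_sq_eq_abs]
  exact Real.sqrt_le_sqrt (Finset.single_le_sum (f := fun b => pgrad r θ b ^ 2)
    (fun b _ => sq_nonneg _) (Finset.mem_univ a))

lemma pgrad_astar_pos [Nonempty (Fin K)] (hK : 2 ≤ K) (r θ : Fin K → ℝ)
    (hr : ∀ a, 0 < r a ∧ r a ≤ 1)
    (astar : Fin K) (hstar : ∀ a, a ≠ astar → r a < r astar) :
    0 < pgrad r θ astar :=
  mul_pos (softmax_pos θ astar) (sub_pos.2 (expReward_lt r θ hK hr astar hstar))

lemma pgradNorm_pos [Nonempty (Fin K)] (hK : 2 ≤ K) (r θ : Fin K → ℝ)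
    (hr : ∀ a, 0 < r a ∧ r a ≤ 1)
    (astar : Fin K) (hstar : ∀ a, a ≠ astar → r a < r astar) :
    0 < pgradNorm r θ :=
  lt_of_lt_of_le (lt_of_lt_of_le (pgrad_astar_pos hK r θ hr astar hstar)
    (le_abs_self _)) (abs_pgrad_le r θ astar)

lemma sum_pgrad [Nonempty (Fin K)] (r θ : Fin K → ℝ) : ∑ a, pgrad r θ a = 0 := by
  simp only [pgrad, mul_sub]
  rw [Finset.sum_sub_distrib, ← Finset.sum_mul, softmax_sum, one_mul]
  simp [expReward]

lemma gain (hK : 2 ≤ K) (r : Fin K → ℝ) (hr : ∀ a, 0 < r a ∧ r a ≤ 1)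
    (astar : Fin K) (hstar : ∀ a, a ≠ astar → r a < r astar) (θ : Fin K → ℝ) :
    expReward r θ + 1/12 * pgradNorm r θ ≤
      expReward r (fun a => θ a + (1/6) * (pgrad r θ a / pgradNorm r θ)) := by
  haveI : Nonempty (Fin K) := Fin.pos_iff_nonempty.mp (by omega)
  set F := expReward r θ with hF
  set G := pgradNorm r θ with hGdef
  set g := pgrad r θ with hgdef
  set u : Fin K → ℝ := fun a => (1/6) * (g a / G) with hudef
  show F + 1/12 * G ≤ expReward r (fun a => θ a + u a)
  have hG : 0 < G := pgradNorm_pos hK r θ hr astar hstar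
  have habs : ∀ a, |g a| ≤ G := abs_pgrad_le r θ
  have huabs : ∀ a, |u a| ≤ 1/6 := by
    intro a
    have h1 : |g a| / G ≤ 1 := (div_le_one hG).2 (habs a)
    have : |u a| = 1/6 * (|g a| / G) := by
      rw [hudef]; simp only
      rw [abs_mul, abs_of_nonneg (by norm_num : (0:ℝ) ≤ 1/6), abs_div, abs_of_pos hG]
    rw [this]; nlinarith
  have hsum0 : ∑ a, g a = 0 := sum_pgrad r θ
  have hsumsq : ∑ a, g a ^ 2 = G ^ 2 := sum_pgrad_sq r θ
  have hsumug : ∑ a, u a * g a = G / 6 := by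
    have he : ∀ a, u a * g a = 1/(6*G) * g a ^ 2 := by
      intro a; rw [hudef]; ring
    rw [Finset.sum_congr rfl (fun a _ => he a), ← Finset.mul_sum, hsumsq]
    field_simp [hG.ne']
  have hsumu2 : ∑ a, u a ^ 2 = 1/36 := by
    have he : ∀ a, u a ^ 2 = 1/(36*G^2) * g a ^ 2 := by
      intro a; rw [hudef]; ring
    rw [Finset.sum_congr rfl (fun a _ => he a), ← Finset.mul_sum, hsumsq]
    field_simp [hG.ne']
  have hN : 7/48 * G ≤ ∑ a, Real.exp (u a) * g a := by
    have h2 := Finset.sum_le_sum (fun a (_ : a ∈ Finset.univ) =>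
      scalar_lb (g := g a) ((huabs a).trans (by norm_num)))
    have h3 : ∑ a, (g a + u a * g a - 3/4 * (u a ^ 2 * |g a|))
        = (∑ a, g a) + (∑ a, u a * g a) - 3/4 * ∑ a, u a ^ 2 * |g a| := by
      rw [Finset.sum_sub_distrib, Finset.sum_add_distrib, Finset.mul_sum]
    have h4 : ∑ a, u a ^ 2 * |g a| ≤ G / 36 := by
      calc ∑ a, u a ^ 2 * |g a| ≤ ∑ a, u a ^ 2 * G :=
            Finset.sum_le_sum (fun a _ => mul_le_mul_of_nonneg_left (habs a) (sq_nonneg _))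
        _ = G / 36 := by rw [← Finset.sum_mul, hsumu2]; ring
    rw [h3, hsum0, hsumug] at h2
    linarith
  have hS : ∑ a, softmax θ a * Real.exp (u a) ≤ 19/16 := by
    calc ∑ a, softmax θ a * Real.exp (u a) ≤ ∑ a, softmax θ a * (19/16) :=
          Finset.sum_le_sum (fun a _ =>
            mul_le_mul_of_nonneg_left (scalar_ub (huabs a)) (softmax_pos θ a).le)
      _ = 19/16 := by rw [← Finset.sum_mul, softmax_sum, one_mul]
  have hSpos : (0:ℝ) < ∑ a, softmax θ a * Real.exp (u a) :=
    Finset.sum_pos (fun a _ => mul_pos (softmax_pos θ a) (Real.exp_pos _))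
      Finset.univ_nonempty
  have hE : (0:ℝ) < ∑ a', Real.exp (θ a') := sumexp_pos θ
  have hEP : ∀ a, Real.exp (θ a) = (∑ a', Real.exp (θ a')) * softmax θ a := by
    intro a; rw [softmax]; field_simp
  have hW : ∑ b, Real.exp (θ b + u b)
      = (∑ a', Real.exp (θ a')) * ∑ b, softmax θ b * Real.exp (u b) := by
    rw [Finset.mul_sum]
    exact Finset.sum_congr rfl (fun b _ => by rw [Real.exp_add, hEP b]; ring)
  have hNum : ∑ a, Real.exp (θ a + u a) * r a
      = (∑ a', Real.exp (θ a')) * ∑ a, softmax θ a * Real.exp (u a) * r a := by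
    rw [Finset.mul_sum]
    exact Finset.sum_congr rfl (fun a _ => by rw [Real.exp_add, hEP a]; ring)
  have hER : expReward r (fun a => θ a + u a)
      = (∑ a, Real.exp (θ a + u a) * r a) / (∑ b, Real.exp (θ b + u b)) := by
    simp only [expReward, softmax]
    rw [Finset.sum_div]
    exact Finset.sum_congr rfl (fun a _ => by ring)
  have hsplit : ∑ a, softmax θ a * Real.exp (u a) * r a
      = F * (∑ a, softmax θ a * Real.exp (u a)) + ∑ a, Real.exp (u a) * g a := by
    rw [Finset.mul_sum, ← Finset.sum_add_distrib]
    refine Finset.sum_congr rfl (fun a _ => ?_)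
    have hga : g a = softmax θ a * (r a - F) := rfl
    rw [hga]; ring
  rw [hER, hW, hNum, mul_div_mul_left _ _ (ne_of_gt hE), le_div_iff₀ hSpos, hsplit]
  nlinarith [mul_le_mul_of_nonneg_left hS (by positivity : (0:ℝ) ≤ G/12)]

lemma pgrad_le_pgrad (hK : 2 ≤ K) (r : Fin K → ℝ) (hr : ∀ a, 0 < r a ∧ r a ≤ 1)
    (astar : Fin K) (hstar : ∀ a, a ≠ astar → r a < r astar) (θ : Fin K → ℝ)
    (hinv : ∀ b, θ b ≤ θ astar) (b : Fin K) :
    pgrad r θ b ≤ pgrad r θ astar := by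
  haveI : Nonempty (Fin K) := Fin.pos_iff_nonempty.mp (by omega)
  have hP : softmax θ b ≤ softmax θ astar := by
    simp only [softmax]
    exact div_le_div_of_nonneg_right (Real.exp_le_exp.2 (hinv b)) (sumexp_pos θ).le
  rcases le_or_gt (r b) (expReward r θ) with h | h
  · have h1 : pgrad r θ b ≤ 0 :=
      mul_nonpos_of_nonneg_of_nonpos (softmax_pos θ b).le (by linarith)
    exact h1.trans (pgrad_astar_pos hK r θ hr astar hstar).le
  · have hrb : r b ≤ r astar := by
      rcases eq_or_ne b astar with rfl | h'
      · exact le_rfl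
      · exact (hstar b h').le
    exact mul_le_mul hP (by linarith) (by linarith) (softmax_pos θ astar).le

lemma inv_step (hK : 2 ≤ K) (r : Fin K → ℝ) (hr : ∀ a, 0 < r a ∧ r a ≤ 1)
    (astar : Fin K) (hstar : ∀ a, a ≠ astar → r a < r astar) (θ : Fin K → ℝ)
    (hinv : ∀ b, θ b ≤ θ astar) (b : Fin K) :
    θ b + (1/6) * (pgrad r θ b / pgradNorm r θ) ≤
      θ astar + (1/6) * (pgrad r θ astar / pgradNorm r θ) := by
  haveI : Nonempty (Fin K) := Fin.pos_iff_nonempty.mp (by omega)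
  have hG : 0 < pgradNorm r θ := pgradNorm_pos hK r θ hr astar hstar
  have hg := pgrad_le_pgrad hK r hr astar hstar θ hinv b
  have h2 : pgrad r θ b / pgradNorm r θ ≤ pgrad r θ astar / pgradNorm r θ :=
    div_le_div_of_nonneg_right hg hG.le
  have := hinv b
  nlinarith

lemma softmax_ge_invK (hK : 2 ≤ K) (θ : Fin K → ℝ) (astar : Fin K)
    (hinv : ∀ b, θ b ≤ θ astar) : 1 / (K : ℝ) ≤ softmax θ astar := by
  haveI : Nonempty (Fin K) := Fin.pos_iff_nonempty.mp (by omega)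
  have hP : ∀ b, softmax θ b ≤ softmax θ astar := by
    intro b
    simp only [softmax]
    exact div_le_div_of_nonneg_right (Real.exp_le_exp.2 (hinv b)) (sumexp_pos θ).le
  have h1 : (1:ℝ) ≤ K * softmax θ astar := by
    calc (1:ℝ) = ∑ b, softmax θ b := (softmax_sum θ).symm
      _ ≤ ∑ _b : Fin K, softmax θ astar := Finset.sum_le_sum (fun b _ => hP b)
      _ = K * softmax θ astar := by
        rw [Finset.sum_const, Finset.card_univ, Fintype.card_fin, nsmul_eq_mul]
  have hK0 : (0:ℝ) < K := by positivity
  rw [div_le_iff₀ hK0]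
  linarith

end Main

/-- GNPG upper bound with exact gradients, learning rate `1/6`.
Here `θ 0` is the paper's `θ_1`, so the paper's `θ_t` is `θ (t-1)` and the
rate `e^{−c(t−1)/12}` becomes `e^{−c·t/12}`. If `c = inf_t π_{θ_t}(a*) > 0` then
`(π* − π_{θ_t})ᵀ r ≤ (π* − π_{θ_1})ᵀ r · e^{−c(t−1)/12}`; with uniform
initialization, `c ≥ 1/K`. -/
theorem gnpg_true_gradient_upper_bound
    {K : ℕ} (hK : 2 ≤ K) (r : Fin K → ℝ)
    (hr : ∀ a, 0 < r a ∧ r a ≤ 1)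
    (astar : Fin K) (hstar : ∀ a, a ≠ astar → r a < r astar)
    (θ : ℕ → Fin K → ℝ)
    (hupd : ∀ t, θ (t + 1) = fun a => θ t a + (1 / 6) * (pgrad r (θ t) a / pgradNorm r (θ t)))
    (c : ℝ) (hc : c = ⨅ t : ℕ, softmax (θ t) astar) :
    (0 < c →
      ∀ t : ℕ, r astar - expReward r (θ t) ≤
        (r astar - expReward r (θ 0)) * Real.exp (-(c * t) / 12)) ∧
    ((∀ a, softmax (θ 0) a = 1 / K) → 1 / (K : ℝ) ≤ c) := by
  haveI : Nonempty (Fin K) := Fin.pos_iff_nonempty.mp (by omega)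
  constructor
  · intro _ t
    have hbdd : BddBelow (Set.range fun t => softmax (θ t) astar) := by
      refine ⟨0, ?_⟩
      rintro x ⟨s, rfl⟩
      exact (softmax_pos (θ s) astar).le
    have hcle : ∀ s : ℕ, c ≤ softmax (θ s) astar := by
      intro s; rw [hc]; exact ciInf_le hbdd s
    have hδ : ∀ s : ℕ, 0 < r astar - expReward r (θ s) := fun s =>
      sub_pos.2 (expReward_lt r (θ s) hK hr astar hstar)
    have hstep : ∀ s : ℕ, r astar - expReward r (θ (s+1)) ≤
        (r astar - expReward r (θ s)) * (1 - c/12) := by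
      intro s
      have hg := gain hK r hr astar hstar (θ s)
      rw [← hupd s] at hg
      have hGl : c * (r astar - expReward r (θ s)) ≤ pgradNorm r (θ s) := by
        calc c * (r astar - expReward r (θ s))
            ≤ softmax (θ s) astar * (r astar - expReward r (θ s)) :=
              mul_le_mul_of_nonneg_right (hcle s) (hδ s).le
          _ = pgrad r (θ s) astar := rfl
          _ ≤ pgradNorm r (θ s) := (le_abs_self _).trans (abs_pgrad_le r (θ s) astar)
      nlinarith [hg, hGl]
    induction t with
    | zero => simp
    | succ s ih =>
      have h1 := hstep s
      have h2 : (r astar - expReward r (θ s)) * (1 - c/12) ≤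
          (r astar - expReward r (θ s)) * Real.exp (-c/12) :=
        mul_le_mul_of_nonneg_left (by linarith [Real.add_one_le_exp (-c/12)]) (hδ s).le
      have h3 : (r astar - expReward r (θ s)) * Real.exp (-c/12) ≤
          ((r astar - expReward r (θ 0)) * Real.exp (-(c*s)/12)) * Real.exp (-c/12) :=
        mul_le_mul_of_nonneg_right ih (Real.exp_pos _).le
      have h4 : ((r astar - expReward r (θ 0)) * Real.exp (-(c*s)/12)) * Real.exp (-c/12)
          = (r astar - expReward r (θ 0)) * Real.exp (-(c*(s+1 : ℕ))/12) := by
        rw [mul_assoc, ← Real.exp_add]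
        congr 2
        push_cast
        ring
      calc r astar - expReward r (θ (s+1))
          ≤ (r astar - expReward r (θ s)) * (1 - c/12) := h1
        _ ≤ (r astar - expReward r (θ s)) * Real.exp (-c/12) := h2
        _ ≤ ((r astar - expReward r (θ 0)) * Real.exp (-(c*s)/12)) * Real.exp (-c/12) := h3
        _ = (r astar - expReward r (θ 0)) * Real.exp (-(c*(s+1 : ℕ))/12) := h4
  · intro hunif
    have hinv : ∀ t : ℕ, ∀ b, θ t b ≤ θ t astar := by
      intro t
      induction t with
      | zero =>
        intro b
        have hE := sumexp_pos (θ 0)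
        have hb := hunif b
        have ha := hunif astar
        simp only [softmax] at hb ha
        rw [div_eq_iff hE.ne'] at hb ha
        have h1 : Real.exp (θ 0 b) = Real.exp (θ 0 astar) := by rw [hb, ha]
        exact (Real.exp_eq_exp.mp h1).le
      | succ s ih =>
        intro b
        rw [hupd s]
        exact inv_step hK r hr astar hstar (θ s) ih b
    rw [hc]
    exact le_ciInf (fun t => softmax_ge_invK hK (θ t) astar (hinv t))
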